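/- (Necessary conditions for S₁ to be of finite Chen type) Suppose there exist real constants λ₁, λ₂, λ₃ such that Δ(r₁) = λ₁·t, Δ(r₂) = λ₂·a(t), Δ(r₃) = λ₃·s hold for all (t,s) ∈ I × ℝ, where r₁ = t, r₂ = a(t), r₃ = s. Then necessarily λ₃ = 0 and a″(t)·(t + a(t)·a′(t)) = 0 for all t ∈ I. -/

import Mathlib

noncomputable section

/-- Partial derivative with respect to the first (t) variable. -/
def pdx (f : ℝ × ℝ → ℝ) : ℝ × ℝ → ℝ := fun p => fderiv ℝ f p (1, 0)

/-- Partial derivative with respect to the second (s) variable. -/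
def pdy (f : ℝ × ℝ → ℝ) : ℝ × ℝ → ℝ := fun p => fderiv ℝ f p (0, 1)

/-- First fundamental form coefficient `E = 1 + a′² + ¼(a − t a′)²` of the ruled surface
`S₁ : r(t,s) = (t, a(t), s)` in the Heisenberg group `H₃`. -/
def aE (a : ℝ → ℝ) (t : ℝ) : ℝ := 1 + deriv a t ^ 2 + (a t - t * deriv a t) ^ 2 / 4

/-- First fundamental form coefficient `F = ½(a − t a′)` of `S₁`. -/
def aF (a : ℝ → ℝ) (t : ℝ) : ℝ := (a t - t * deriv a t) / 2

/-- `W = √(EG − F²) = √(1 + a′²)` for `S₁` (here `G = 1`). -/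
def aW (a : ℝ → ℝ) (t : ℝ) : ℝ := Real.sqrt (1 + deriv a t ^ 2)

/-- The Laplace–Beltrami operator of `S₁ : r(t,s) = (t, a(t), s)`, with the sign convention
`Δφ = −(1/W)[∂_t((G φ_t − F φ_s)/W) + ∂_s((−F φ_t + E φ_s)/W)]`, `G = 1`. -/
def lap1 (a : ℝ → ℝ) (φ : ℝ × ℝ → ℝ) : ℝ × ℝ → ℝ := fun p =>
  -(1 / aW a p.1) *
    (pdx (fun q => (1 * pdx φ q - aF a q.1 * pdy φ q) / aW a q.1) p +
     pdy (fun q => (-(aF a q.1) * pdx φ q + aE a q.1 * pdy φ q) / aW a q.1) p)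

lemma pdx_comp_fst (f : ℝ → ℝ) (p : ℝ × ℝ) (hf : DifferentiableAt ℝ f p.1) :
    pdx (fun q => f q.1) p = deriv f p.1 := by
  have h : (fun q : ℝ × ℝ => f q.1) = f ∘ Prod.fst := rfl
  rw [pdx, h, fderiv_comp p hf differentiableAt_fst, fderiv_fst]
  simp only [ContinuousLinearMap.comp_apply, ContinuousLinearMap.coe_fst']
  rw [← fderiv_apply_one_eq_deriv]

lemma pdy_comp_fst (f : ℝ → ℝ) (p : ℝ × ℝ) (hf : DifferentiableAt ℝ f p.1) :
    pdy (fun q => f q.1) p = 0 := by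
  have h : (fun q : ℝ × ℝ => f q.1) = f ∘ Prod.fst := rfl
  rw [pdy, h, fderiv_comp p hf differentiableAt_fst, fderiv_fst]
  simp only [ContinuousLinearMap.comp_apply, ContinuousLinearMap.coe_fst']
  simp

lemma pdx_snd (p : ℝ × ℝ) : pdx (fun q : ℝ × ℝ => q.2) p = 0 := by
  rw [pdx, fderiv_snd]; simp

lemma pdy_snd (p : ℝ × ℝ) : pdy (fun q : ℝ × ℝ => q.2) p = 1 := by
  rw [pdy, fderiv_snd]; simp

/-- **Necessary conditions for `S₁` to be of finite Chen type**: if there are constants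
`λ₁, λ₂, λ₃` with `Δr₁ = λ₁·t`, `Δr₂ = λ₂·a(t)`, `Δr₃ = λ₃·s` on `I × ℝ`, then `λ₃ = 0`
and `a″(t)(t + a(t)a′(t)) = 0` for all `t ∈ I`. -/
theorem finite_type_S1_necessary
    (I : Set ℝ) (hI : IsOpen I) (hIne : I.Nonempty) (hIconn : I.OrdConnected)
    (a : ℝ → ℝ) (ha : ContDiffOn ℝ (⊤ : ℕ∞) a I)
    (l1 l2 l3 : ℝ)
    (h1 : ∀ t ∈ I, ∀ s : ℝ, lap1 a (fun q => q.1) (t, s) = l1 * t)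
    (h2 : ∀ t ∈ I, ∀ s : ℝ, lap1 a (fun q => a q.1) (t, s) = l2 * a t)
    (h3 : ∀ t ∈ I, ∀ s : ℝ, lap1 a (fun q => q.2) (t, s) = l3 * s) :
    l3 = 0 ∧ ∀ t ∈ I, deriv (deriv a) t * (t + a t * deriv a t) = 0 := by
  set g : ℝ → ℝ := fun u => -aF a u / aW a u with hgdef
  have ha' : ContDiffOn ℝ (⊤ : ℕ∞) (deriv a) I := ha.deriv_of_isOpen hI (by exact le_of_eq rfl)
  -- pointwise facts
  have main : ∀ t ∈ I, ∀ s : ℝ, lap1 a (fun q => q.2) (t, s) = -(1 / aW a t) * deriv g t := by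
    intro t ht s
    have hmem := hI.mem_nhds ht
    have hd : DifferentiableAt ℝ a t := (ha.contDiffAt hmem).differentiableAt (by simp)
    have hd' : DifferentiableAt ℝ (deriv a) t := (ha'.contDiffAt hmem).differentiableAt (by simp)
    have hF : DifferentiableAt ℝ (aF a) t := by
      unfold aF; exact (hd.sub (differentiableAt_fun_id.mul hd')).div_const 2
    have hIn : DifferentiableAt ℝ (fun u => 1 + deriv a u ^ 2) t :=
      (differentiableAt_const 1).add (hd'.pow 2)
    have hInpos : (0:ℝ) < 1 + deriv a t ^ 2 := by positivity
    have hW : DifferentiableAt ℝ (aW a) t := by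
      unfold aW; exact hIn.sqrt hInpos.ne'
    have hWpos : 0 < aW a t := Real.sqrt_pos.mpr hInpos
    have hE : DifferentiableAt ℝ (aE a) t := by
      unfold aE
      exact ((differentiableAt_const 1).add (hd'.pow 2)).add
        (((hd.sub (differentiableAt_fun_id.mul hd')).pow 2).div_const 4)
    have hg : DifferentiableAt ℝ g t := (hF.neg).div hW hWpos.ne'
    have hk : DifferentiableAt ℝ (fun u => aE a u / aW a u) t := hE.div hW hWpos.ne'
    have e1 : (fun q : ℝ × ℝ =>
        (1 * pdx (fun q : ℝ × ℝ => q.2) q - aF a q.1 * pdy (fun q : ℝ × ℝ => q.2) q) / aW a q.1)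
        = fun q : ℝ × ℝ => g q.1 := by
      funext q; rw [pdx_snd, pdy_snd, hgdef]; ring
    have e2 : (fun q : ℝ × ℝ =>
        (-(aF a q.1) * pdx (fun q : ℝ × ℝ => q.2) q + aE a q.1 * pdy (fun q : ℝ × ℝ => q.2) q) / aW a q.1)
        = fun q : ℝ × ℝ => aE a q.1 / aW a q.1 := by
      funext q; rw [pdx_snd, pdy_snd]; ring
    simp only [lap1, e1, e2]
    rw [pdx_comp_fst g (t, s) hg, pdy_comp_fst (fun u => aE a u / aW a u) (t, s) hk]
    simp
  have hl3 : l3 = 0 := by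
    obtain ⟨t0, ht0⟩ := hIne
    have e0 := h3 t0 ht0 0
    have e1 := h3 t0 ht0 1
    rw [main t0 ht0 0] at e0
    rw [main t0 ht0 1] at e1
    linarith
  refine ⟨hl3, fun t ht => ?_⟩
  -- deriv g t = 0
  have hg0 : deriv g t = 0 := by
    have e0 := h3 t ht 0
    rw [main t ht 0, hl3] at e0
    have hInpos : (0:ℝ) < 1 + deriv a t ^ 2 := by positivity
    have hWpos : 0 < aW a t := Real.sqrt_pos.mpr hInpos
    have h1W : -(1 / aW a t) ≠ 0 := by
      simp only [ne_eq, neg_eq_zero, div_eq_zero_iff]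
      push_neg
      exact ⟨one_ne_zero, hWpos.ne'⟩
    field_simp at e0
    simpa using e0
  -- now compute deriv g t explicitly
  have hmem := hI.mem_nhds ht
  have hd : DifferentiableAt ℝ a t := (ha.contDiffAt hmem).differentiableAt (by simp)
  have hd' : DifferentiableAt ℝ (deriv a) t := (ha'.contDiffAt hmem).differentiableAt (by simp)
  have ha'' : ContDiffOn ℝ (⊤ : ℕ∞) (deriv (deriv a)) I := ha'.deriv_of_isOpen hI (by exact le_of_eq rfl)
  have hd'' : DifferentiableAt ℝ (deriv (deriv a)) t :=
    (ha''.contDiffAt hmem).differentiableAt (by simp)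
  have hF : DifferentiableAt ℝ (aF a) t := by
    unfold aF; exact (hd.sub (differentiableAt_fun_id.mul hd')).div_const 2
  have hIn : DifferentiableAt ℝ (fun u => 1 + deriv a u ^ 2) t :=
    (differentiableAt_const 1).add (hd'.pow 2)
  have hInpos : (0:ℝ) < 1 + deriv a t ^ 2 := by positivity
  have hW : DifferentiableAt ℝ (aW a) t := by unfold aW; exact hIn.sqrt hInpos.ne'
  have hWpos : 0 < aW a t := Real.sqrt_pos.mpr hInpos
  have hW2 : aW a t ^ 2 = 1 + deriv a t ^ 2 := by
    unfold aW; exact Real.sq_sqrt hInpos.le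
  have hdF : deriv (aF a) t = -(t * deriv (deriv a) t) / 2 := by
    unfold aF
    rw [deriv_div_const, deriv_fun_sub (g := fun u => u * deriv a u) hd (differentiableAt_fun_id.mul hd'),
      deriv_fun_mul differentiableAt_fun_id hd']
    simp
  have hdIn : deriv (fun u => 1 + deriv a u ^ 2) t = 2 * deriv a t * deriv (deriv a) t := by
    rw [deriv_const_add, deriv_fun_pow hd' 2]
    ring
  have hdW : deriv (aW a) t = deriv a t * deriv (deriv a) t / aW a t := by
    unfold aW
    rw [deriv_sqrt hIn hInpos.ne', hdIn]
    rw [show Real.sqrt (1 + deriv a t ^ 2) = aW a t from rfl]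
    field_simp
  have hdg : deriv g t = (-(deriv (aF a) t) * aW a t - (-(aF a t)) * deriv (aW a) t) / aW a t ^ 2 := by
    rw [hgdef]
    rw [deriv_fun_div (c := fun u => -aF a u) hF.neg hW hWpos.ne']
    rw [deriv.fun_neg]
  rw [hdg, hdF, hdW] at hg0
  have hFval : aF a t = (a t - t * deriv a t) / 2 := rfl
  rw [hFval] at hg0
  set D := deriv a t
  set D2 := deriv (deriv a) t
  set A := a t
  set W := aW a t
  have hWne : W ≠ 0 := hWpos.ne'
  field_simp at hg0
  -- hg0 should now be polynomial; conclude using hW2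
  linear_combination hg0 - t * D2 * hW2
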